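/- Let G be a finite cut group with an abelian Sylow p-subgroup P for p ∈ {2,3}. Then P has exponent dividing 4 or 6; in particular P is a cut group. -/

import Mathlib

open Pointwise

/-- A finite group is a *cut group* (inverse semi-rational) if for every element `x`
and every integer `j` coprime to the order of `x`, `x ^ j` is conjugate to `x` or to `x⁻¹`. -/
def IsCutGroup (G : Type*) [Group G] : Prop :=
  ∀ x : G, ∀ j : ℤ, Int.gcd j (orderOf x) = 1 →
    IsConj (x ^ j) x ∨ IsConj (x ^ j) x⁻¹

private lemma conj_pow_pow {G : Type*} [Group G] {c y : G} {k : ℕ}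
    (h : c * y * c⁻¹ = y ^ k) (n : ℕ) : c ^ n * y * (c ^ n)⁻¹ = y ^ k ^ n := by
  induction n with
  | zero => simp
  | succ n ih =>
    have h1 : c ^ (n + 1) * y * (c ^ (n + 1))⁻¹ = c * (c ^ n * y * (c ^ n)⁻¹) * c⁻¹ := by
      group
    rw [h1, ih, ← conj_pow, h, ← pow_mul, ← pow_succ']

private lemma commute_of_pgroup {G : Type*} [Group G] [Finite G] {p : ℕ} [Fact p.Prime]
    (P : Sylow p G) (hab : ∀ a b : (P : Subgroup G), a * b = b * a)
    {y z : G} {a b : ℕ} (hy : orderOf y = p ^ a) (hz : orderOf z = p ^ b)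
    (hmem : z * y * z⁻¹ ∈ Subgroup.zpowers y) : z * y * z⁻¹ = y := by
  have hH : IsPGroup p (Subgroup.zpowers y) :=
    IsPGroup.of_card (by rw [Nat.card_zpowers, hy])
  have hK : IsPGroup p (Subgroup.zpowers z) :=
    IsPGroup.of_card (by rw [Nat.card_zpowers, hz])
  obtain ⟨m, hm⟩ := Subgroup.mem_zpowers_iff.mp hmem
  have hnorm : Subgroup.zpowers z ≤ Subgroup.normalizer (Subgroup.zpowers y : Set G) := by
    rw [Subgroup.zpowers_le]
    apply Subgroup.mem_normalizer_fintype
    intro n hn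
    obtain ⟨i, hi⟩ := Subgroup.mem_zpowers_iff.mp hn
    have : z * n * z⁻¹ = (y ^ m) ^ i := by rw [← hi, ← conj_zpow, hm]
    rw [this]
    exact Subgroup.zpow_mem _ (Subgroup.zpow_mem _ (Subgroup.mem_zpowers y) m) i
  have hQ : IsPGroup p (Subgroup.zpowers y ⊔ Subgroup.zpowers z : Subgroup G) :=
    IsPGroup.to_sup_of_normal_left' hH hK hnorm
  obtain ⟨Q, hQle⟩ := hQ.exists_le_sylow
  obtain ⟨g, hg⟩ := MulAction.exists_smul_eq G P Q
  haveI : IsMulCommutative (P : Subgroup G) := ⟨⟨fun a b => hab a b⟩⟩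
  haveI hc1 : IsMulCommutative ((g • P : Sylow p G) : Subgroup G) := by
    rw [Sylow.coe_subgroup_smul, Subgroup.pointwise_smul_def]
    exact Subgroup.map_isMulCommutative _ _
  haveI hc2 : IsMulCommutative (Q : Subgroup G) := hg ▸ hc1
  have hyQ : y ∈ (Q : Subgroup G) :=
    hQle (Subgroup.mem_sup_left (Subgroup.mem_zpowers y))
  have hzQ : z ∈ (Q : Subgroup G) :=
    hQle (Subgroup.mem_sup_right (Subgroup.mem_zpowers z))
  have hcomm := Subgroup.mul_comm_of_mem_isMulCommutative (H := (Q : Subgroup G)) hzQ hyQ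
  rw [hcomm, mul_inv_cancel_right]

private lemma conj_contra {G : Type*} [Group G] [Finite G] {p : ℕ} [Fact p.Prime]
    (P : Sylow p G) (hab : ∀ a b : (P : Subgroup G), a * b = b * a)
    {y c : G} {a k : ℕ} (hy : orderOf y = p ^ a)
    (hc : c * y * c⁻¹ = y ^ k)
    (hk : ∀ u : ℕ, ¬ p ∣ u → ¬ (k ^ u ≡ 1 [MOD p ^ a])) : False := by
  have hp : p.Prime := Fact.out
  have hc0 : orderOf c ≠ 0 := (orderOf_pos c).ne'
  set t := orderOf c with ht
  set u := ordCompl[p] t with hu'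
  have hu : ¬ p ∣ u := Nat.not_dvd_ordCompl hp hc0
  have hz1 : (c ^ u) ^ (p ^ t.factorization p) = 1 := by
    rw [← pow_mul, mul_comm, Nat.ordProj_mul_ordCompl_eq_self]
    exact pow_orderOf_eq_one c
  obtain ⟨b, -, hb⟩ := (Nat.dvd_prime_pow hp).mp (orderOf_dvd_of_pow_eq_one hz1)
  have hconj : c ^ u * y * (c ^ u)⁻¹ = y ^ k ^ u := conj_pow_pow hc u
  have heq : c ^ u * y * (c ^ u)⁻¹ = y :=
    commute_of_pgroup P hab hy hb
      (by rw [hconj]; exact Subgroup.pow_mem _ (Subgroup.mem_zpowers y) _)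
  rw [hconj] at heq
  have hmod : k ^ u ≡ 1 [MOD orderOf y] := by
    have h1 : y ^ k ^ u = y ^ 1 := by rw [pow_one]; exact heq
    exact pow_eq_pow_iff_modEq.mp h1
  exact hk u hu (hy ▸ hmod)

private lemma pow_mod_cycle {k d u n : ℕ} (h : k ^ d ≡ 1 [MOD n]) :
    k ^ u ≡ k ^ (u % d) [MOD n] := by
  conv_lhs => rw [← Nat.div_add_mod u d]
  rw [pow_add, pow_mul]
  calc (k ^ d) ^ (u / d) * k ^ (u % d)
      ≡ 1 ^ (u / d) * k ^ (u % d) [MOD n] := (h.pow _).mul_right _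
    _ = k ^ (u % d) := by rw [one_pow, one_mul]

private lemma conj_eq_pow {G : Type*} [Group G] {y c : G} {j m e : ℕ}
    (hj : (c * y * c⁻¹) ^ j = y ^ e)
    (hm : j * m ≡ 1 [MOD orderOf y]) :
    c * y * c⁻¹ = y ^ (e * m) := by
  have hsc : SemiconjBy c y (c * y * c⁻¹) := by
    unfold SemiconjBy
    group
  have ho : orderOf y = orderOf (c * y * c⁻¹) := SemiconjBy.orderOf_eq c hsc
  have h1 : (c * y * c⁻¹) ^ (j * m) = (c * y * c⁻¹) ^ 1 :=
    pow_eq_pow_iff_modEq.mpr (ho ▸ hm)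
  rw [pow_mul, hj, ← pow_mul, pow_one] at h1
  exact h1.symm

/-- order 8 elements are impossible -/
private lemma no_order_eight {G : Type*} [Group G] [Finite G] (hG : IsCutGroup G)
    (P : Sylow 2 G) (hab : ∀ a b : (P : Subgroup G), a * b = b * a)
    {y : G} (hy : orderOf y = 2 ^ 3) : False := by
  have hgcd : Int.gcd 3 (orderOf y) = 1 := by rw [hy]; decide
  have hm : (3 : ℕ) * 3 ≡ 1 [MOD orderOf y] := by rw [hy]; decide
  have hk : ∀ k : ℕ, k ^ 2 % 8 = 1 → k % 8 ≠ 1 →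
      (∀ u : ℕ, ¬ (2:ℕ) ∣ u → ¬ (k ^ u ≡ 1 [MOD 2 ^ 3])) := by
    intro k hk2 hk1 u hu hmod
    have h2 : k ^ 2 ≡ 1 [MOD 8] := by unfold Nat.ModEq; omega
    have h3 := (pow_mod_cycle (u := u) h2).symm.trans hmod
    have hu2 : u % 2 = 1 := by omega
    rw [hu2, pow_one] at h3
    exact hk1 h3
  rcases hG y 3 hgcd with h | h <;> rw [isConj_iff] at h <;> obtain ⟨c, hc⟩ := h <;>
    rw [show ((3:ℤ)) = ((3:ℕ):ℤ) by norm_num, zpow_natCast] at hc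
  · have hc' : (c * y * c⁻¹) ^ (3:ℕ) = y ^ 1 := by
      rw [conj_pow, pow_one]
      exact hc
    exact conj_contra P hab hy (conj_eq_pow hc' hm)
      (hk 3 (by norm_num) (by norm_num))
  · have hinv : y⁻¹ = y ^ (7:ℕ) := by
      apply inv_eq_of_mul_eq_one_right
      have : y ^ (8:ℕ) = 1 := by
        rw [show (8:ℕ) = 2 ^ 3 by norm_num, ← hy]; exact pow_orderOf_eq_one y
      calc y * y ^ (7:ℕ) = y ^ (8:ℕ) := by rw [← pow_succ']
        _ = 1 := this
    have hc' : (c * y * c⁻¹) ^ (3:ℕ) = y ^ (7:ℕ) := by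
      rw [conj_pow, ← hinv]
      exact hc
    exact conj_contra P hab hy (conj_eq_pow hc' hm)
      (hk 21 (by norm_num) (by norm_num))

/-- order 9 elements are impossible -/
private lemma no_order_nine {G : Type*} [Group G] [Finite G] (hG : IsCutGroup G)
    (P : Sylow 3 G) (hab : ∀ a b : (P : Subgroup G), a * b = b * a)
    {y : G} (hy : orderOf y = 3 ^ 2) : False := by
  have hgcd : Int.gcd 2 (orderOf y) = 1 := by rw [hy]; decide
  have hm : (2 : ℕ) * 5 ≡ 1 [MOD orderOf y] := by rw [hy]; decide
  have hk : ∀ k : ℕ, k ^ 6 % 9 = 1 → k % 9 ≠ 1 → k ^ 2 % 9 ≠ 1 → k ^ 4 % 9 ≠ 1 →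
      k ^ 5 % 9 ≠ 1 →
      (∀ u : ℕ, ¬ (3:ℕ) ∣ u → ¬ (k ^ u ≡ 1 [MOD 3 ^ 2])) := by
    intro k hk6 hk1 hk2 hk4 hk5 u hu hmod
    have h6 : k ^ 6 ≡ 1 [MOD 9] := by unfold Nat.ModEq; omega
    have h3 := (pow_mod_cycle (u := u) h6).symm.trans hmod
    have hu6 : u % 6 = 1 ∨ u % 6 = 2 ∨ u % 6 = 4 ∨ u % 6 = 5 := by omega
    rcases hu6 with h | h | h | h <;> rw [h] at h3 <;> unfold Nat.ModEq at h3 <;>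
      first
        | (simp only [pow_one] at h3; omega)
        | omega
  rcases hG y 2 hgcd with h | h <;> rw [isConj_iff] at h <;> obtain ⟨c, hc⟩ := h <;>
    rw [show ((2:ℤ)) = ((2:ℕ):ℤ) by norm_num, zpow_natCast] at hc
  · have hc' : (c * y * c⁻¹) ^ (2:ℕ) = y ^ 1 := by
      rw [conj_pow, pow_one]
      exact hc
    exact conj_contra P hab hy (conj_eq_pow hc' hm)
      (hk 5 (by norm_num) (by norm_num) (by norm_num) (by norm_num) (by norm_num))
  · have hinv : y⁻¹ = y ^ (8:ℕ) := by
      apply inv_eq_of_mul_eq_one_right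
      have : y ^ (9:ℕ) = 1 := by
        rw [show (9:ℕ) = 3 ^ 2 by norm_num, ← hy]; exact pow_orderOf_eq_one y
      calc y * y ^ (8:ℕ) = y ^ (9:ℕ) := by rw [← pow_succ']
        _ = 1 := this
    have hc' : (c * y * c⁻¹) ^ (2:ℕ) = y ^ (8:ℕ) := by
      rw [conj_pow, ← hinv]
      exact hc
    exact conj_contra P hab hy (conj_eq_pow hc' hm)
      (hk 40 (by norm_num) (by norm_num) (by norm_num) (by norm_num) (by norm_num))

private lemma order_dvd_pow {G : Type*} [Group G] [Finite G] {p s : ℕ} [Fact p.Prime]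
    (P : Sylow p G) (x : (P : Subgroup G))
    (hbig : ∀ y : G, orderOf y = p ^ (s + 1) → False) :
    orderOf (x : G) ∣ p ^ s := by
  have hp : p.Prime := Fact.out
  obtain ⟨n, hn⟩ := P.2 x
  have hdvd : orderOf (x : G) ∣ p ^ n := by
    rw [Subgroup.orderOf_coe]; exact orderOf_dvd_of_pow_eq_one hn
  obtain ⟨a, -, ha⟩ := (Nat.dvd_prime_pow hp).mp hdvd
  by_cases hle : a ≤ s
  · rw [ha]; exact pow_dvd_pow p hle
  · exfalso
    push_neg at hle
    set y : G := (x : G) ^ p ^ (a - (s + 1)) with hydef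
    apply hbig y
    rw [hydef, orderOf_pow' _ (pow_ne_zero _ hp.ne_zero), ha,
      Nat.gcd_eq_right (pow_dvd_pow p (by omega)), Nat.pow_div (by omega) hp.pos]
    congr 1
    omega

private lemma cut_of_small_exponent {H : Type*} [Group H]
    (h : Monoid.exponent H ∣ 4 ∨ Monoid.exponent H ∣ 6) : IsCutGroup H := by
  intro x j hj
  have hx : orderOf x ∣ 4 ∨ orderOf x ∣ 6 :=
    h.imp (Monoid.order_dvd_exponent x).trans (Monoid.order_dvd_exponent x).trans
  obtain ⟨n, hn⟩ : ∃ n, n = orderOf x := ⟨_, rfl⟩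
  rw [← hn] at hj hx
  have hn0 : n ≠ 0 := by
    rcases hx with h' | h' <;> intro h0 <;> rw [h0] at h' <;> simp at h'
  -- reduce j modulo n
  have hco : IsCoprime (j : ℤ) (n : ℤ) := Int.isCoprime_iff_gcd_eq_one.mpr hj
  have hco' : IsCoprime (j % (n : ℤ)) (n : ℤ) := by
    have : j % (n : ℤ) = j + (n : ℤ) * (-(j / n)) := by
      rw [Int.emod_def]; ring
    rw [this]
    exact hco.add_mul_left_left _
  have hgr : Int.gcd (j % (n : ℤ)) n = 1 := Int.isCoprime_iff_gcd_eq_one.mp hco'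
  have hjr : x ^ j = x ^ (j % (n : ℤ)) := by
    rw [hn, zpow_mod_orderOf]
  have hr0 : 0 ≤ j % (n : ℤ) := Int.emod_nonneg j (by exact_mod_cast hn0)
  have hrn : j % (n : ℤ) < n := Int.emod_lt_of_pos j (by positivity)
  have hnvals : n = 1 ∨ n = 2 ∨ n = 3 ∨ n = 4 ∨ n = 6 := by
    have h4 : n ≤ 6 := by
      rcases hx with h' | h' <;> exact (Nat.le_of_dvd (by norm_num) h').trans (by norm_num)
    interval_cases n <;> rcases hx with h' | h' <;> revert h' <;> decide
  have key : j % (n : ℤ) = 1 ∨ j % (n : ℤ) = (n : ℤ) - 1 := by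
    set r : ℤ := j % (n : ℤ) with hrdef
    clear_value r
    clear hjr hco hco' hj hn h hx hn0
    rcases hnvals with rfl | rfl | rfl | rfl | rfl <;>
      push_cast at hr0 hrn ⊢ <;>
      interval_cases r <;> revert hgr <;> decide
  rcases key with hkey | hkey
  · left
    rw [hjr, hkey, zpow_one]
  · right
    rw [hjr, hkey]
    have hxn : x ^ ((n : ℤ) - 1) = x⁻¹ := by
      rw [zpow_sub, zpow_one, zpow_natCast, hn, pow_orderOf_eq_one, one_mul]
    rw [hxn]

theorem stmt_4 {G : Type*} [Group G] [Finite G] (hG : IsCutGroup G)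
    (p : ℕ) [Fact p.Prime] (hp : p = 2 ∨ p = 3) (P : Sylow p G)
    (hab : ∀ a b : (P : Subgroup G), a * b = b * a) :
    (Monoid.exponent (P : Subgroup G) ∣ 4 ∨ Monoid.exponent (P : Subgroup G) ∣ 6) ∧
      IsCutGroup (P : Subgroup G) := by
  have hexp : Monoid.exponent (P : Subgroup G) ∣ 4 ∨ Monoid.exponent (P : Subgroup G) ∣ 6 := by
    rcases hp with rfl | rfl
    · left
      apply Monoid.exponent_dvd_of_forall_pow_eq_one
      intro g
      have h4 : orderOf (g : G) ∣ 4 :=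
        order_dvd_pow (s := 2) P g (fun y hy => no_order_eight hG P hab hy)
      have : orderOf g ∣ 4 := by rwa [Subgroup.orderOf_coe] at h4
      exact orderOf_dvd_iff_pow_eq_one.mp this
    · right
      apply Monoid.exponent_dvd_of_forall_pow_eq_one (n := 6)
      intro g
      have h3 : orderOf (g : G) ∣ 3 ^ 1 :=
        order_dvd_pow (s := 1) P g (fun y hy => no_order_nine hG P hab hy)
      have : orderOf g ∣ 6 := by
        rw [Subgroup.orderOf_coe] at h3
        exact dvd_trans (by simpa using h3) (by norm_num)
      exact orderOf_dvd_iff_pow_eq_one.mp this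
  exact ⟨hexp, cut_of_small_exponent hexp⟩
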